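/- Let m, n be natural numbers with m ≥ 2, let λ > 1 be a real, set T := λ·√(mn), and let a > 0, b > 0 be reals. Suppose q_1, …, q_{m−1} are nonnegative reals satisfying q_ℓ ≤ (T/(mn) − 1/T)^ℓ · (1 − T/(mn))^{m−ℓ−1} · ℓ·b/(T·a) for every 1 ≤ ℓ ≤ m − 1. Then Σ_{ℓ=1}^{m−1} C(m−1, ℓ) · q_ℓ ≤ (1 − 1/λ²) · (b·(m−1)/(a·m·n)) · (1 − 1/T)^{m−2}, where C(·,·) denotes the binomial coefficient. -/

import Mathlib

lemma binom_deriv (x y : ℝ) (N : ℕ) :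
    ∑ ℓ ∈ Finset.Icc 1 N, (N.choose ℓ : ℝ) * (ℓ * (x ^ ℓ * y ^ (N - ℓ))) =
      N * x * (x + y) ^ (N - 1) := by
  cases N with
  | zero => simp
  | succ M =>
    have h0 : Finset.Icc 1 (M + 1) = Finset.range (M + 2) \ {0} := by
      ext i; simp [Finset.mem_Icc, Finset.mem_range, Nat.lt_succ_iff, Nat.one_le_iff_ne_zero]
      omega
    rw [h0, Finset.sum_sdiff_eq_sub (by simp)]
    simp only [Finset.sum_singleton, Nat.cast_zero, zero_mul, mul_zero, sub_zero]
    rw [Finset.sum_range_succ']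
    simp only [Nat.cast_zero, zero_mul, mul_zero, add_zero]
    have key : ∀ k ∈ Finset.range (M + 1),
        ((M + 1).choose (k + 1) : ℝ) * ((k + 1 : ℕ) * (x ^ (k + 1) * y ^ (M + 1 - (k + 1)))) =
        (M + 1) * x * (x ^ k * y ^ (M - k) * (M.choose k : ℝ)) := by
      intro k hk
      have h := Nat.add_one_mul_choose_eq M k
      have hc : ((M + 1).choose (k + 1) : ℝ) * ((k + 1 : ℕ) : ℝ) = ((M + 1 : ℕ) : ℝ) * (M.choose k : ℝ) := by
        exact_mod_cast h.symm
      have h2 : M + 1 - (k + 1) = M - k := by omega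
      rw [h2, pow_succ']
      push_cast at hc ⊢
      linear_combination (x * x ^ k * y ^ (M - k)) * hc
    rw [Finset.sum_congr rfl key, ← Finset.mul_sum, ← add_pow]
    push_cast; ring_nf

/-- if each `q_ℓ` satisfies the paper's upper bound for `T = λ√(mn)`, then
`Σ_{ℓ=1}^{m−1} C(m−1,ℓ)·q_ℓ ≤ (1 − 1/λ²)·(b(m−1)/(amn))·(1 − 1/T)^{m−2}`. -/
theorem high_prob_no_T_bound (m n : ℕ) (hm : 2 ≤ m) (lam T : ℝ) (hlam : 1 < lam)
    (hT : T = lam * Real.sqrt (m * n)) (hTmn : T ≤ (m * n : ℝ))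
    (a b : ℝ) (ha : 0 < a) (hb : 0 < b)
    (q : ℕ → ℝ) (hq0 : ∀ ℓ, 1 ≤ ℓ → ℓ ≤ m - 1 → 0 ≤ q ℓ)
    (hq : ∀ ℓ, 1 ≤ ℓ → ℓ ≤ m - 1 →
      q ℓ ≤ (T / (m * n) - 1 / T) ^ ℓ * (1 - T / (m * n)) ^ (m - ℓ - 1) *
            (ℓ * b / (T * a))) :
    ∑ ℓ ∈ Finset.Icc 1 (m - 1), ((m - 1).choose ℓ : ℝ) * q ℓ ≤
      (1 - 1 / lam ^ 2) * (b * ((m : ℝ) - 1) / (a * m * n)) * (1 - 1 / T) ^ (m - 2) := by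
  rcases Nat.eq_zero_or_pos n with hn | hn
  · -- degenerate case n = 0
    subst hn
    have hT0 : T = 0 := by simp [hT]
    have hsum : ∑ ℓ ∈ Finset.Icc 1 (m - 1), ((m - 1).choose ℓ : ℝ) * q ℓ ≤ 0 := by
      apply Finset.sum_nonpos
      intro ℓ hℓ
      rw [Finset.mem_Icc] at hℓ
      have hql := hq ℓ hℓ.1 hℓ.2
      simp only [hT0, Nat.cast_zero, mul_zero, div_zero, zero_div, sub_zero, zero_sub,
        zero_mul, mul_zero, zero_pow (by omega : ℓ ≠ 0), neg_zero] at hql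
      exact mul_nonpos_of_nonneg_of_nonpos (by positivity) hql
    refine hsum.trans ?_
    simp
  · -- main case
    have hmn : (0 : ℝ) < (m : ℝ) * n := by
      have : 0 < m := by omega
      positivity
    have hsqrt : (0 : ℝ) < Real.sqrt ((m : ℝ) * n) := Real.sqrt_pos.mpr hmn
    have hTpos : 0 < T := by rw [hT]; positivity
    have hsq : T ^ 2 = lam ^ 2 * ((m : ℝ) * n) := by
      rw [hT, mul_pow, Real.sq_sqrt hmn.le]
    set x : ℝ := T / (m * n) - 1 / T with hxdef
    set y : ℝ := 1 - T / (m * n) with hydef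
    have hx : 0 ≤ x := by
      have hx' : x = (T ^ 2 - (m : ℝ) * n) / (T * ((m : ℝ) * n)) := by
        rw [hxdef, div_sub_div _ _ (ne_of_gt hmn) (ne_of_gt hTpos)]; ring
      rw [hx']
      apply div_nonneg _ (by positivity)
      rw [hsq]
      have h1 : (1 : ℝ) ≤ lam ^ 2 := by nlinarith
      nlinarith [mul_nonneg (by linarith : (0:ℝ) ≤ lam ^ 2 - 1) hmn.le]
    have hy : 0 ≤ y := by
      rw [hydef, sub_nonneg, div_le_one hmn]
      exact hTmn
    have step1 : ∑ ℓ ∈ Finset.Icc 1 (m - 1), ((m - 1).choose ℓ : ℝ) * q ℓ ≤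
        ∑ ℓ ∈ Finset.Icc 1 (m - 1), ((m - 1).choose ℓ : ℝ) *
          (ℓ * (x ^ ℓ * y ^ (m - 1 - ℓ))) * (b / (T * a)) := by
      apply Finset.sum_le_sum
      intro ℓ hℓ
      rw [Finset.mem_Icc] at hℓ
      have hql := hq ℓ hℓ.1 hℓ.2
      have he : m - ℓ - 1 = m - 1 - ℓ := by omega
      rw [he] at hql
      calc ((m - 1).choose ℓ : ℝ) * q ℓ
          ≤ ((m - 1).choose ℓ : ℝ) * (x ^ ℓ * y ^ (m - 1 - ℓ) * (ℓ * b / (T * a))) :=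
            mul_le_mul_of_nonneg_left hql (by positivity)
        _ = ((m - 1).choose ℓ : ℝ) * (ℓ * (x ^ ℓ * y ^ (m - 1 - ℓ))) * (b / (T * a)) := by
            ring
    refine step1.trans_eq ?_
    rw [← Finset.sum_mul, binom_deriv]
    have hxy : x + y = 1 - 1 / T := by rw [hxdef, hydef]; ring
    have hN : ((m - 1 : ℕ) : ℝ) = (m : ℝ) - 1 := by
      have : (1 : ℕ) ≤ m := by omega
      push_cast [Nat.cast_sub this]; ring
    have hN2 : m - 1 - 1 = m - 2 := by omega
    rw [hxy, hN, hN2]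
    have hlam0 : lam ≠ 0 := by linarith
    have hmn' : (m : ℝ) * n = T ^ 2 / lam ^ 2 := by
      rw [eq_div_iff (pow_ne_zero 2 hlam0)]
      linarith [hsq]
    have hxval : x = (lam ^ 2 - 1) / T := by
      rw [hxdef, hmn']
      field_simp
    rw [hxval]
    have hcoef : b / (T * a) * (((m : ℝ) - 1) * ((lam ^ 2 - 1) / T)) =
        (1 - 1 / lam ^ 2) * (b * ((m : ℝ) - 1) / (a * (m : ℝ) * n)) := by
      rw [show a * (m : ℝ) * n = a * ((m : ℝ) * n) by ring, hmn']
      field_simp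
    calc ((m : ℝ) - 1) * ((lam ^ 2 - 1) / T) * (1 - 1 / T) ^ (m - 2) * (b / (T * a))
        = b / (T * a) * (((m : ℝ) - 1) * ((lam ^ 2 - 1) / T)) * (1 - 1 / T) ^ (m - 2) := by
          ring
      _ = (1 - 1 / lam ^ 2) * (b * ((m : ℝ) - 1) / (a * (m : ℝ) * n)) *
            (1 - 1 / T) ^ (m - 2) := by rw [hcoef]
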